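/- Let S be the set of all nontrivial identities over alphabets of at most four variables that are satisfied by the hypoplactic monoid hypo, excluding the identity (L) xyzxty ≈ yxzxty and all identities equivalent to it. Then (L) is not a consequence of S; semantically, there exists a monoid that satisfies every identity in S but does not satisfy (L). -/

import Mathlib

open FreeMonoid

set_option maxRecDepth 100000
set_option maxHeartbeats 4000000

/-- The alphabet `A = {1 < 2 < 3 < ...}` of positive integers. -/
abbrev Alph : Type := ℕ+

/-- The finite alphabet `A_n = {1 < ... < n}`. -/
abbrev AlphN (n : ℕ) : Type := {a : ℕ+ // (a : ℕ) ≤ n}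

/-- The defining relations of the hypoplactic monoid. -/
def HypoRel (u v : FreeMonoid Alph) : Prop :=
  (∃ a b c : Alph, a ≤ b ∧ b < c ∧
      u = of a * of c * of b ∧ v = of c * of a * of b) ∨
  (∃ a b c : Alph, a < b ∧ b ≤ c ∧
      u = of b * of a * of c ∧ v = of b * of c * of a) ∨
  (∃ a b c d : Alph, a ≤ b ∧ b < c ∧ c ≤ d ∧
      u = of c * of a * of d * of b ∧ v = of a * of c * of b * of d) ∨
  (∃ a b c d : Alph, a < b ∧ b ≤ c ∧ c < d ∧
      u = of b * of d * of a * of c ∧ v = of d * of b * of c * of a)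

/-- The hypoplactic congruence on `A*`: the congruence generated by `HypoRel`. -/
def hypoCon : Con (FreeMonoid Alph) := conGen HypoRel

/-- The infinite-rank hypoplactic monoid `hypo`. -/
abbrev Hypo : Type := hypoCon.Quotient

/-- The inclusion of `A_n*` into `A*`. -/
def inclN (n : ℕ) : FreeMonoid (AlphN n) →* FreeMonoid Alph :=
  FreeMonoid.map Subtype.val

/-- The hypoplactic congruence restricted to `A_n*`. -/
def hypoConN (n : ℕ) : Con (FreeMonoid (AlphN n)) :=
  hypoCon.comap (inclN n) (fun x y => map_mul (inclN n) x y)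

/-- The rank-`n` hypoplactic monoid `hypo_n`. -/
abbrev HypoN (n : ℕ) : Type := (hypoConN n).Quotient

/-- The letter `1` of `A_2`. -/
def a1 : AlphN 2 := ⟨1, by norm_num⟩

/-- The letter `2` of `A_2`. -/
def a2 : AlphN 2 := ⟨2, by norm_num⟩

/-- The homomorphism `φ_{ij} : A* → hypo_2`, sending `i ↦ [1]`, `j ↦ [2]`,
`a ↦ [21]` for `i < a < j`, and every other letter to the identity. -/
def phi (i j : Alph) : FreeMonoid Alph →* HypoN 2 :=
  FreeMonoid.lift fun a =>
    if a = i then (hypoConN 2).mk' (of a1)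
    else if a = j then (hypoConN 2).mk' (of a2)
    else if i < a ∧ a < j then (hypoConN 2).mk' (of a2 * of a1)
    else 1

/-- A monoid `M` satisfies the identity `u ≈ v` (over the alphabet of variables `X`)
if every homomorphic evaluation of the two words in `M` gives equal values. -/
def MSatisfies (M : Type*) [Monoid M] {X : Type*} (u v : FreeMonoid X) : Prop :=
  ∀ ψ : FreeMonoid X →* M, ψ u = ψ v

/-- An identity `u ≈ v` is balanced if every variable occurs the same number of
times in `u` as in `v`. -/
def IsBalanced {X : Type*} [DecidableEq X] (u v : FreeMonoid X) : Prop :=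
  ∀ x : X, u.toList.count x = v.toList.count x

/-- The left side of identity (L): `xyzxty` (variables `x = 0`, `y = 1`, `z = 2`, `t = 3`). -/
def wL1 : FreeMonoid (Fin 4) := of 0 * of 1 * of 2 * of 0 * of 3 * of 1
/-- The right side of identity (L): `yxzxty`. -/
def wL2 : FreeMonoid (Fin 4) := of 1 * of 0 * of 2 * of 0 * of 3 * of 1
/-- The left side of identity (M): `xzxytx`. -/
def wM1 : FreeMonoid (Fin 4) := of 0 * of 2 * of 0 * of 1 * of 3 * of 0
/-- The right side of identity (M): `xzyxtx`. -/
def wM2 : FreeMonoid (Fin 4) := of 0 * of 2 * of 1 * of 0 * of 3 * of 0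
/-- The left side of identity (R): `xzytxy`. -/
def wR1 : FreeMonoid (Fin 4) := of 0 * of 2 * of 1 * of 3 * of 0 * of 1
/-- The right side of identity (R): `xzytyx`. -/
def wR2 : FreeMonoid (Fin 4) := of 0 * of 2 * of 1 * of 3 * of 1 * of 0

/-- Two identities (over the same alphabet of variables) are equivalent if one is
obtained from the other by renaming variables via a bijection of the variables
and/or swapping the two sides. -/
def EquivIdent {X : Type*} (p q : FreeMonoid X × FreeMonoid X) : Prop :=
  ∃ σ : X ≃ X,
    (FreeMonoid.map σ p.1 = q.1 ∧ FreeMonoid.map σ p.2 = q.2) ∨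
    (FreeMonoid.map σ p.1 = q.2 ∧ FreeMonoid.map σ p.2 = q.1)

/- ===== Part 1: a small monoid T2 detecting "2 before 1" patterns ===== -/

structure T2 where
  p : Bool  -- contains letter-class 1
  q : Bool  -- contains letter-class 2
  r : Bool  -- contains 2 ... 1 (class 2 before class 1)
deriving DecidableEq

instance : Fintype T2 :=
  Fintype.ofList
    [T2.mk false false false, T2.mk false false true, T2.mk false true false,
     T2.mk false true true, T2.mk true false false, T2.mk true false true,
     T2.mk true true false, T2.mk true true true]
    (by intro ⟨a,b,c⟩; cases a <;> cases b <;> cases c <;> simp)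

instance : Monoid T2 where
  mul x y := ⟨x.p || y.p, x.q || y.q, x.r || y.r || (x.q && y.p)⟩
  one := ⟨false, false, false⟩
  mul_assoc := by decide
  one_mul := by decide
  mul_one := by decide

lemma T2.mul_def (x y : T2) :
    x * y = ⟨x.p || y.p, x.q || y.q, x.r || y.r || (x.q && y.p)⟩ := rfl

def e1 : T2 := ⟨true, false, false⟩
def e2 : T2 := ⟨false, true, false⟩

/-- classification of positive-integer letters: 1, 2, big. -/
def clsP (a : ℕ+) : Fin 3 := if (a:ℕ) = 1 then 0 else if (a:ℕ) = 2 then 1 else 2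

def k0 : Fin 3 → T2 := ![e1, e2, 1]

def kap (a : ℕ+) : T2 := k0 (clsP a)

lemma clsP_mono {a b : ℕ+} (h : a ≤ b) : clsP a ≤ clsP b := by
  have h' : (a:ℕ) ≤ (b:ℕ) := h
  have ha := a.pos; have hb := b.pos
  unfold clsP; split_ifs <;> first | decide | omega

lemma clsP_strict {b c : ℕ+} (h : b < c) :
    clsP b < clsP c ∨ (clsP b = 2 ∧ clsP c = 2) := by
  have h' : (b:ℕ) < (c:ℕ) := h
  have hb := b.pos; have hc := c.pos
  unfold clsP; split_ifs <;> first | (left; decide) | (right; exact ⟨rfl, rfl⟩) | omega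

/-- the letter map into T2, as a hom on the free monoid over the alphabet -/
def f2 : FreeMonoid Alph →* T2 := FreeMonoid.lift kap

lemma f2_rel : ∀ x y, HypoRel x y → (Con.ker f2) x y := by
  intro x y h
  rcases h with ⟨a,b,c,hab,hbc,hx,hy⟩ | ⟨a,b,c,hab,hbc,hx,hy⟩ |
    ⟨a,b,c,d,hab,hbc,hcd,hx,hy⟩ | ⟨a,b,c,d,hab,hbc,hcd,hx,hy⟩ <;>
    subst hx <;> subst hy <;>
    simp only [Con.ker_rel, map_mul, f2, FreeMonoid.lift_eval_of, kap]
  · have h1 := clsP_mono hab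
    have h2 := clsP_strict hbc
    revert h1 h2; generalize clsP a = i; generalize clsP b = j; generalize clsP c = k
    revert i j k; decide
  · have h1 := clsP_strict hab
    have h2 := clsP_mono hbc
    revert h1 h2; generalize clsP a = i; generalize clsP b = j; generalize clsP c = k
    revert i j k; decide
  · have h1 := clsP_mono hab
    have h2 := clsP_strict hbc
    have h3 := clsP_mono hcd
    revert h1 h2 h3
    generalize clsP a = i; generalize clsP b = j; generalize clsP c = k; generalize clsP d = l
    revert i j k l; decide
  · have h1 := clsP_strict hab
    have h2 := clsP_mono hbc
    have h3 := clsP_strict hcd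
    revert h1 h2 h3
    generalize clsP a = i; generalize clsP b = j; generalize clsP c = k; generalize clsP d = l
    revert i j k l; decide

lemma hypoCon_le_f2 : hypoCon ≤ Con.ker f2 := Con.conGen_le.mpr f2_rel

/-- T2-valued invariant of the hypoplactic monoid. -/
def g2 : Hypo →* T2 := hypoCon.lift f2 hypoCon_le_f2

/- length invariant -/
def flen : FreeMonoid Alph →* Multiplicative ℕ :=
  FreeMonoid.lift (fun _ => Multiplicative.ofAdd 1)

lemma hypoCon_le_flen : hypoCon ≤ Con.ker flen := by
  refine Con.conGen_le.mpr (fun x y h => ?_)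
  rcases h with ⟨a,b,c,hab,hbc,hx,hy⟩ | ⟨a,b,c,hab,hbc,hx,hy⟩ |
    ⟨a,b,c,d,hab,hbc,hcd,hx,hy⟩ | ⟨a,b,c,d,hab,hbc,hcd,hx,hy⟩ <;>
    subst hx <;> subst hy <;>
    simp only [Con.ker_rel, map_mul, flen, FreeMonoid.lift_eval_of]

def glen : Hypo →* Multiplicative ℕ := hypoCon.lift flen hypoCon_le_flen
/- ===== Part 2: list-level invariants ===== -/

def befB (s t : Fin 4) : List (Fin 4) → Bool
  | [] => false
  | a :: l => (a = s && l.contains t) || befB s t l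

def IEq (u v : List (Fin 4)) : Prop :=
  (∀ s : Fin 4, u.count s = v.count s) ∧ ∀ s t : Fin 4, befB s t u = befB s t v

instance IEq.decidable (u v : List (Fin 4)) : Decidable (IEq u v) := by
  unfold IEq; infer_instance

lemma IEq.refl (u : List (Fin 4)) : IEq u u := ⟨fun _ => rfl, fun _ _ => rfl⟩
lemma IEq.symm {u v} (h : IEq u v) : IEq v u :=
  ⟨fun s => (h.1 s).symm, fun s t => (h.2 s t).symm⟩
lemma IEq.trans {u v w} (h : IEq u v) (h' : IEq v w) : IEq u w :=
  ⟨fun s => (h.1 s).trans (h'.1 s), fun s t => (h.2 s t).trans (h'.2 s t)⟩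

lemma contains_eq_count {l : List (Fin 4)} {s : Fin 4} :
    l.contains s = decide (0 < l.count s) := by
  simp [List.elem_eq_mem, List.count_pos_iff]

lemma contains_append (t : Fin 4) (l l' : List (Fin 4)) :
    (l ++ l').contains t = (l.contains t || l'.contains t) := by simp

lemma beq_swap (a s : Fin 4) : (s == a) = decide (a = s) := by
  by_cases h : a = s
  · subst h; simp
  · simp [h, Ne.symm h]

lemma befB_append (s t : Fin 4) (l l' : List (Fin 4)) :
    befB s t (l ++ l') = (befB s t l || befB s t l' || (l.contains s && l'.contains t)) := by
  induction l with
  | nil => simp [befB]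
  | cons a l ih =>
      simp only [List.cons_append, befB, List.append_eq, ih, contains_append, List.contains_cons, beq_swap]
      generalize decide (a = s) = A
      generalize befB s t l = D
      generalize befB s t l' = E
      generalize l.contains t = B
      generalize l'.contains t = C
      generalize l.contains s = F
      cases A <;> cases B <;> cases C <;> cases D <;> cases E <;> cases F <;> rfl

lemma befB_map {σ : Fin 4 → Fin 4} (hσ : Function.Injective σ) (s t : Fin 4)
    (l : List (Fin 4)) : befB (σ s) (σ t) (l.map σ) = befB s t l := by
  induction l with
  | nil => rfl
  | cons a l ih =>
      simp only [List.map_cons, befB, ih]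
      have h1 : decide (σ a = σ s) = decide (a = s) := decide_eq_decide.mpr hσ.eq_iff
      have h2 : (List.map σ l).contains (σ t) = l.contains t := by
        simp [List.elem_eq_mem, List.mem_map_of_injective hσ]
      rw [h1, h2]

lemma befB_self (s : Fin 4) (l : List (Fin 4)) :
    befB s s l = decide (2 ≤ l.count s) := by
  induction l with
  | nil => simp [befB]
  | cons a l ih =>
      simp only [befB, ih, List.count_cons, beq_swap]
      by_cases h : a = s
      · subst h
        rw [contains_eq_count]
        simp only [decide_eq_true_eq, if_pos rfl, decide_true, Bool.true_and]
        generalize l.count a = c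
        by_cases h0 : 0 < c <;> by_cases h2 : 2 ≤ c <;>
          simp [h0, h2] <;> omega
      · simp [h, Ne.symm h]

lemma length_eq_of_counts {u v : List (Fin 4)} (h : ∀ s, u.count s = v.count s) :
    u.length = v.length := by
  have key : ∀ l : List (Fin 4), l.length = ∑ s : Fin 4, l.count s := by
    intro l
    induction l with
    | nil => simp
    | cons a l ih =>
        simp only [List.length_cons, ih, List.count_cons, beq_swap, decide_eq_true_eq,
          Finset.sum_add_distrib]
        have h1 : (∑ s : Fin 4, if s = a then 1 else 0) = 1 := by
          rw [Finset.sum_ite_eq']; simp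
        omega
  rw [key, key]; exact Finset.sum_congr rfl fun s _ => h s
/- ===== Part 3: finite combinatorial facts ===== -/

def wL1l : List (Fin 4) := [0,1,2,0,3,1]
def wL2l : List (Fin 4) := [1,0,2,0,3,1]

def iEqB (u v : List (Fin 4)) : Bool :=
  (List.finRange 4).all fun s =>
    (u.count s == v.count s) &&
    ((List.finRange 4).all fun t => befB s t u == befB s t v)

lemma iEqB_iff {u v : List (Fin 4)} : iEqB u v = true ↔ IEq u v := by
  constructor
  · intro h
    simp only [iEqB, List.all_eq_true, List.mem_finRange, Bool.and_eq_true, beq_iff_eq] at h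
    exact ⟨fun s => (h s trivial).1, fun s t => (h s trivial).2 t trivial⟩
  · intro ⟨h1, h2⟩
    simp only [iEqB, List.all_eq_true, List.mem_finRange, Bool.and_eq_true, beq_iff_eq]
    exact fun s _ => ⟨h1 s, fun t _ => h2 s t⟩

/-- bounded quantification over all words of a given length -/
def forallW : ℕ → (List (Fin 4) → Bool) → Bool
  | 0, P => P []
  | n+1, P => (List.finRange 4).all fun a => forallW n (fun w => P (a :: w))

lemma forallW_iff : ∀ (n : ℕ) (P : List (Fin 4) → Bool),
    forallW n P = true ↔ ∀ w : List (Fin 4), w.length = n → P w = true := by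
  intro n
  induction n with
  | zero =>
      intro P
      constructor
      · intro h w hw; rw [List.length_eq_zero_iff] at hw; subst hw; exact h
      · intro h; exact h [] rfl
  | succ n ih =>
      intro P
      simp only [forallW, List.all_eq_true, List.mem_finRange]
      constructor
      · intro h w hw
        match w with
        | a :: w' => exact (ih (fun w => P (a :: w))).mp (h a trivial) w' (by simpa using hw)
      · intro h a _
        exact (ih (fun w => P (a :: w))).mpr fun w hw => h (a :: w) (by simpa using hw)

/-- class fact: a length-6 word with the invariant of wL1l is wL1l or wL2l -/
lemma classFact0 :
    forallW 6 (fun w => !(iEqB w wL1l) || (w == wL1l || w == wL2l)) = true := by decide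
/- ===== Part 4: the tiling check ===== -/

def lookA (ps : List (Fin 4 × List (Fin 4))) (m : Fin 4) : List (Fin 4) :=
  match ps.find? (fun q => q.1 == m) with
  | some q => q.2
  | none => []

def consist (ps : List (Fin 4 × List (Fin 4))) : Bool :=
  ps.all fun q => lookA ps q.1 == q.2

def splitsL : List (Fin 4) → List (List (List (Fin 4)))
  | [] => [[]]
  | a :: t => (splitsL t).flatMap fun bs =>
      match bs with
      | [] => [[[a]]]
      | b :: rest => [[a] :: b :: rest, (a :: b) :: rest]

def permsL : List (List (Fin 4)) :=
  [[0,1,2,3],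
   [0,1,3,2],
   [0,2,1,3],
   [0,2,3,1],
   [0,3,1,2],
   [0,3,2,1],
   [1,0,2,3],
   [1,0,3,2],
   [1,2,0,3],
   [1,2,3,0],
   [1,3,0,2],
   [1,3,2,0],
   [2,0,1,3],
   [2,0,3,1],
   [2,1,0,3],
   [2,1,3,0],
   [2,3,0,1],
   [2,3,1,0],
   [3,0,1,2],
   [3,0,2,1],
   [3,1,0,2],
   [3,1,2,0],
   [3,2,0,1],
   [3,2,1,0]]

def permF (l : List (Fin 4)) : Fin 4 → Fin 4 := fun m => l.getD m 0

lemma permsL_bij : ∀ l ∈ permsL, Function.Bijective (permF l) := by decide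

/-- all ways to parse a word as a concatenation of (nonempty) images of letters -/
def parseF (g : Fin 4 → List (Fin 4)) : ℕ → List (Fin 4) → List (List (Fin 4))
  | _, [] => [[]]
  | 0, _ => []
  | fuel+1, w => (List.finRange 4).flatMap fun m =>
      let b := g m
      if b.isPrefixOf w && !b.isEmpty then
        (parseF g fuel (w.drop b.length)).map (m :: ·)
      else []

lemma parseF_complete (g : Fin 4 → List (Fin 4)) :
    ∀ (v : List (Fin 4)) (fuel : ℕ) (w : List (Fin 4)),
    (v.map g).flatten = w → (∀ m ∈ v, g m ≠ []) → v.length ≤ fuel →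
    v ∈ parseF g fuel w := by
  intro v
  induction v with
  | nil => intro fuel w hw _ _; subst hw; cases fuel <;> exact List.mem_singleton.mpr rfl
  | cons m v ih =>
      intro fuel w hw hne hlen
      have hgm : g m ≠ [] := hne m ((List.mem_cons_self : m ∈ m :: v))
      subst hw
      simp only [List.map_cons, List.flatten_cons] at *
      match fuel with
      | 0 => simp at hlen
      | fuel+1 =>
          have hw' : g m ++ (v.map g).flatten ≠ [] := by
            intro h; exact hgm (List.append_eq_nil_iff.mp h).1
          match hmm : g m ++ (v.map g).flatten, hw' with
          | a :: w', _ =>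
              rw [show parseF g (fuel+1) (a::w') = (List.finRange 4).flatMap (fun m' =>
                let b := g m'
                if b.isPrefixOf (a::w') && !b.isEmpty then
                  (parseF g fuel ((a::w').drop b.length)).map (m' :: ·)
                else []) from rfl]
              rw [List.mem_flatMap]
              refine ⟨m, List.mem_finRange m, ?_⟩
              rw [← hmm]
              have hpre : (g m).isPrefixOf (g m ++ (v.map g).flatten) = true := by
                rw [List.isPrefixOf_iff_prefix]; exact List.prefix_append _ _
              have hnemp : (!(g m).isEmpty) = true := by
                cases hg : g m with
                | nil => exact absurd hg hgm
                | cons x xs => rfl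
              simp only [hpre, hnemp, Bool.and_self, if_pos rfl, List.drop_left]
              exact List.mem_map.mpr ⟨v, ih fuel _ rfl (fun x hx => hne x (List.mem_cons_of_mem m hx))
                (Nat.le_of_succ_le_succ hlen), rfl⟩

def fcCheck (W1 W2 : List (Fin 4)) : Bool :=
  (splitsL W1).all fun bs =>
    forallW bs.length fun u' =>
      !(consist (u'.zip bs)) ||
      (parseF (lookA (u'.zip bs)) 7 W2).all fun v' =>
        !(iEqB u' v') ||
        (permsL.any fun τl => (u'.map (permF τl) == W1) && (v'.map (permF τl) == W2))

lemma fcCheck1 : fcCheck wL1l wL2l = true := by decide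
lemma fcCheck2 : fcCheck wL2l wL1l = true := by decide
/- ===== Part 5: bridging lemmas ===== -/

lemma splitsL_complete : ∀ (n : ℕ) (w : List (Fin 4)), w.length ≤ n →
    ∀ bs : List (List (Fin 4)), bs.flatten = w → (∀ b ∈ bs, b ≠ []) → bs ∈ splitsL w := by
  intro n
  induction n with
  | zero =>
      intro w hw bs hf hne
      rw [Nat.le_zero, List.length_eq_zero_iff] at hw; subst hw
      match bs, hf with
      | [], _ => exact List.mem_singleton.mpr rfl
      | b :: rest, hf =>
          exfalso
          exact hne b ((List.mem_cons_self : b ∈ b :: rest)) (List.append_eq_nil_iff.mp hf).1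
  | succ n ih =>
      intro w hw bs hf hne
      match bs, hf with
      | [], hf => subst hf; exact List.mem_singleton.mpr rfl
      | b :: rest, hf =>
          have hb : b ≠ [] := hne b ((List.mem_cons_self : b ∈ b :: rest))
          match b, hb with
          | a :: b', _ =>
              simp only [List.flatten_cons, List.cons_append] at hf
              subst hf
              set t := b' ++ rest.flatten with ht
              have hlt : t.length ≤ n := by
                have := hw
                simp only [List.length_cons] at this
                omega
              show (a :: b') :: rest ∈ splitsL (a :: t)
              rw [show splitsL (a :: t) = (splitsL t).flatMap (fun bs =>
                match bs with
                | [] => [[[a]]]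
                | b :: rest => [[a] :: b :: rest, (a :: b) :: rest]) from rfl]
              rw [List.mem_flatMap]
              cases hb' : b' with
              | nil =>
                  subst hb'
                  refine ⟨rest, ih t hlt rest (by simp [ht]) (fun x hx => hne x (List.mem_cons_of_mem _ hx)), ?_⟩
                  cases rest with
                  | nil => simp
                  | cons r rs => simp
              | cons c b'' =>
                  refine ⟨b' :: rest, ih t hlt (b' :: rest) (by simp [ht])
                    (fun x hx => by
                      rcases List.mem_cons.mp hx with h | h
                      · subst h; simp [hb']
                      · exact hne x (List.mem_cons_of_mem _ h)), ?_⟩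
                  rw [hb']
                  simp

lemma lookA_zip_map (g : Fin 4 → List (Fin 4)) :
    ∀ (u : List (Fin 4)) (m : Fin 4), m ∈ u → lookA (u.zip (u.map g)) m = g m := by
  intro u
  induction u with
  | nil => intro m hm; cases hm
  | cons a u ih =>
      intro m hm
      simp only [List.map_cons, List.zip_cons_cons, lookA, List.find?]
      by_cases h : a = m
      · subst h; simp
      · have hm' : m ∈ u := by
          rcases List.mem_cons.mp hm with h' | h'
          · exact absurd h'.symm h
          · exact h'
        have hbeq : ((a, g a).1 == m) = false := by simp [h]
        rw [hbeq]
        have := ih m hm'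
        simpa [lookA] using this

lemma mem_zip_map (g : Fin 4 → List (Fin 4)) :
    ∀ (u : List (Fin 4)) (q : Fin 4 × List (Fin 4)), q ∈ u.zip (u.map g) → q.1 ∈ u ∧ q.2 = g q.1 := by
  intro u
  induction u with
  | nil => intro q hq; cases hq
  | cons a u ih =>
      intro q hq
      simp only [List.map_cons, List.zip_cons_cons, List.mem_cons] at hq
      rcases hq with h | h
      · subst h; exact ⟨(List.mem_cons_self : a ∈ a :: u), rfl⟩
      · exact ⟨List.mem_cons_of_mem _ (ih q h).1, (ih q h).2⟩

lemma consist_zip_map (g : Fin 4 → List (Fin 4)) (u : List (Fin 4)) :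
    consist (u.zip (u.map g)) = true := by
  simp only [consist, List.all_eq_true]
  intro q hq
  obtain ⟨h1, h2⟩ := mem_zip_map g u q hq
  rw [lookA_zip_map g u q.1 h1, h2]
  simp

lemma contains_filter {p : Fin 4 → Bool} {t : Fin 4} (ht : p t = true) (l : List (Fin 4)) :
    (l.filter p).contains t = l.contains t := by
  simp [List.elem_eq_mem, List.mem_filter, ht]

lemma befB_filter {p : Fin 4 → Bool} {s t : Fin 4} (hs : p s = true) (ht : p t = true)
    (l : List (Fin 4)) : befB s t (l.filter p) = befB s t l := by
  induction l with
  | nil => rfl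
  | cons a l ih =>
      by_cases hpa : p a = true
      · rw [List.filter_cons_of_pos hpa]
        simp only [befB, ih, contains_filter ht]
      · rw [List.filter_cons_of_neg (by simp_all)]
        have has : decide (a = s) = false := by
          by_contra h
          have : a = s := of_decide_eq_true (by revert h; cases decide (a = s) <;> simp)
          subst this; exact hpa hs
        simp only [befB, has, Bool.false_and, Bool.false_or, ih]

lemma befB_not_mem_left {s t : Fin 4} {l : List (Fin 4)} (h : s ∉ l) : befB s t l = false := by
  induction l with
  | nil => rfl
  | cons a l ih =>
      have h1 : a ≠ s := fun he => h (he ▸ (List.mem_cons_self : a ∈ a :: l))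
      have h2 : s ∉ l := fun he => h (List.mem_cons_of_mem _ he)
      simp only [befB, ih h2, Bool.or_false, decide_eq_true_eq]
      simp [h1]

lemma befB_not_mem_right {s t : Fin 4} {l : List (Fin 4)} (h : t ∉ l) : befB s t l = false := by
  induction l with
  | nil => rfl
  | cons a l ih =>
      have h2 : t ∉ l := fun he => h (List.mem_cons_of_mem _ he)
      have h3 : l.contains t = false := by
        cases hc : l.contains t
        · rfl
        · exact absurd (List.elem_iff.mp hc) h2
      simp only [befB, ih h2, Bool.or_false, h3, Bool.and_false]

lemma flatten_filter_eps (g : Fin 4 → List (Fin 4)) (l : List (Fin 4)) :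
    (((l.filter fun m => !(g m).isEmpty).map g)).flatten = (l.map g).flatten := by
  induction l with
  | nil => rfl
  | cons a l ih =>
      by_cases h : (g a).isEmpty
      · rw [List.filter_cons_of_neg (by simp [h])]
        have : g a = [] := List.isEmpty_iff.mp h
        simp [this, ih]
      · rw [List.filter_cons_of_pos (by simp [h])]
        simp [ih]

lemma length_le_flatten (g : Fin 4 → List (Fin 4)) :
    ∀ l : List (Fin 4), (∀ m ∈ l, g m ≠ []) → l.length ≤ ((l.map g).flatten).length := by
  intro l
  induction l with
  | nil => simp
  | cons a l ih =>
      intro h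
      have ha : g a ≠ [] := h a ((List.mem_cons_self : a ∈ a :: l))
      have h1 : 1 ≤ (g a).length := by
        cases hg : g a with
        | nil => exact absurd hg ha
        | cons x xs => simp
      simp only [List.map_cons, List.flatten_cons, List.length_append, List.length_cons]
      have := ih (fun m hm => h m (List.mem_cons_of_mem _ hm))
      omega
/- ===== Part 6: class facts and the big lemma ===== -/

lemma IEq_of_map {σ : Fin 4 → Fin 4} (hσ : Function.Injective σ) {u v : List (Fin 4)}
    (h : IEq (u.map σ) (v.map σ)) : IEq u v := by
  constructor
  · intro s
    have := h.1 (σ s)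
    rwa [List.count_map_of_injective _ _ hσ, List.count_map_of_injective _ _ hσ] at this
  · intro s t
    have := h.2 (σ s) (σ t)
    rwa [befB_map hσ, befB_map hσ] at this

lemma IEq_map {σ : Fin 4 → Fin 4} (hσ : Function.Injective σ) {u v : List (Fin 4)}
    (h : IEq u v) : IEq (u.map σ) (v.map σ) := by
  constructor
  · intro s
    obtain ⟨s', rfl⟩ : ∃ s', σ s' = s := by
      obtain ⟨inv, hinv⟩ := Finite.injective_iff_surjective.mp hσ |>.hasRightInverse
      exact ⟨inv s, hinv s⟩
    rw [List.count_map_of_injective _ _ hσ, List.count_map_of_injective _ _ hσ]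
    exact h.1 s'
  · intro s t
    obtain ⟨s', rfl⟩ : ∃ s', σ s' = s := by
      obtain ⟨inv, hinv⟩ := Finite.injective_iff_surjective.mp hσ |>.hasRightInverse
      exact ⟨inv s, hinv s⟩
    obtain ⟨t', rfl⟩ : ∃ t', σ t' = t := by
      obtain ⟨inv, hinv⟩ := Finite.injective_iff_surjective.mp hσ |>.hasRightInverse
      exact ⟨inv t, hinv t⟩
    rw [befB_map hσ, befB_map hσ]
    exact h.2 s' t'

lemma wL1l_length : wL1l.length = 6 := rfl

/-- class fact, permuted version -/
lemma classFact (σ : Equiv.Perm (Fin 4)) {l : List (Fin 4)}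
    (h : IEq l (wL1l.map σ)) : l = wL1l.map σ ∨ l = wL2l.map σ := by
  set l' := l.map σ.symm with hl'
  have hback : l'.map σ = l := by
    simp [hl', List.map_map]
  have hIE : IEq l' wL1l := by
    apply IEq_of_map σ.injective
    rw [hback]
    exact h
  have hlen : l'.length = 6 := by
    rw [length_eq_of_counts hIE.1, wL1l_length]
  have := (forallW_iff 6 _).mp classFact0 l' hlen
  simp only [Bool.or_eq_true, Bool.not_eq_true', beq_iff_eq] at this
  rcases this with h0 | h0
  · rw [← iEqB_iff] at hIE; rw [hIE] at h0; cases h0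
  · rcases h0 with h0 | h0
    · left; rw [← hback, h0]
    · right; rw [← hback, h0]

lemma IEq_wL1l_wL2l : IEq wL1l wL2l := by
  constructor
  · intro s; fin_cases s <;> decide
  · intro s t; fin_cases s <;> fin_cases t <;> decide

lemma classFact2 (σ : Equiv.Perm (Fin 4)) {l : List (Fin 4)}
    (h : IEq l (wL2l.map σ)) : l = wL1l.map σ ∨ l = wL2l.map σ :=
  classFact σ (h.trans (IEq_map σ.injective IEq_wL1l_wL2l).symm)

lemma all_mem_wL1l : ∀ x : Fin 4, x ∈ wL1l := by decide
lemma all_mem_wL2l : ∀ x : Fin 4, x ∈ wL2l := by decide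

/-- The big lemma: common tilings of W1 and W2 by invariant-equal words force a renaming. -/
lemma bigTile (W1 W2 : List (Fin 4)) (hfc : fcCheck W1 W2 = true) (hW : W1.length = 6)
    (hall : ∀ x : Fin 4, x ∈ W1)
    (g : Fin 4 → List (Fin 4)) (u v : List (Fin 4))
    (hIEq : IEq u v)
    (hu : (u.map g).flatten = W1) (hv : (v.map g).flatten = W2) :
    ∃ τ : Fin 4 → Fin 4, Function.Bijective τ ∧ u.map τ = W1 ∧ v.map τ = W2 := by
  classical
  set p : Fin 4 → Bool := fun m => !(g m).isEmpty with hp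
  set u₀ := u.filter p with hu₀
  set v₀ := v.filter p with hv₀
  have hgu₀ : (u₀.map g).flatten = W1 := by rw [hu₀, hp, flatten_filter_eps, hu]
  have hgv₀ : (v₀.map g).flatten = W2 := by rw [hv₀, hp, flatten_filter_eps, hv]
  have hne₀ : ∀ m ∈ u₀, g m ≠ [] := by
    intro m hm
    have := List.of_mem_filter hm
    simpa [hp, List.isEmpty_iff] using this
  have hne₀v : ∀ m ∈ v₀, g m ≠ [] := by
    intro m hm
    have := List.of_mem_filter hm
    simpa [hp, List.isEmpty_iff] using this
  have hIE₀ : IEq u₀ v₀ := by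
    constructor
    · intro s
      cases hps : p s
      · rw [hu₀, hv₀]
        have h1 : s ∉ u.filter p := fun hmem => by
          have := List.of_mem_filter hmem; rw [hps] at this; cases this
        have h2 : s ∉ v.filter p := fun hmem => by
          have := List.of_mem_filter hmem; rw [hps] at this; cases this
        rw [List.count_eq_zero.mpr h1, List.count_eq_zero.mpr h2]
      · rw [hu₀, hv₀, List.count_filter hps, List.count_filter hps]
        exact hIEq.1 s
    · intro s t
      cases hps : p s
      · have h1 : s ∉ u₀ := fun hmem => by
          have := List.of_mem_filter (hu₀ ▸ hmem); rw [hps] at this; cases this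
        have h2 : s ∉ v₀ := fun hmem => by
          have := List.of_mem_filter (hv₀ ▸ hmem); rw [hps] at this; cases this
        rw [befB_not_mem_left h1, befB_not_mem_left h2]
      · cases hpt : p t
        · have h1 : t ∉ u₀ := fun hmem => by
            have := List.of_mem_filter (hu₀ ▸ hmem); rw [hpt] at this; cases this
          have h2 : t ∉ v₀ := fun hmem => by
            have := List.of_mem_filter (hv₀ ▸ hmem); rw [hpt] at this; cases this
          rw [befB_not_mem_right h1, befB_not_mem_right h2]
        · rw [hu₀, hv₀, befB_filter hps hpt, befB_filter hps hpt]
          exact hIEq.2 s t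
  have hlen : u₀.length = v₀.length := length_eq_of_counts hIE₀.1
  have hk6 : u₀.length ≤ 6 := by
    have := length_le_flatten g u₀ hne₀
    rw [hgu₀, hW] at this; exact this
  -- the tiling
  set bs := u₀.map g with hbs
  have hbsmem : bs ∈ splitsL W1 := by
    apply splitsL_complete W1.length W1 le_rfl
    · rw [hbs]; exact hgu₀
    · intro b hb
      rw [hbs] at hb
      obtain ⟨m, hm, rfl⟩ := List.mem_map.mp hb
      exact hne₀ m hm
  have hfc' := hfc
  rw [fcCheck, List.all_eq_true] at hfc'
  have h1 := hfc' bs hbsmem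
  rw [forallW_iff] at h1
  have h2 := h1 u₀ (by rw [hbs, List.length_map])
  rw [consist_zip_map g u₀, Bool.not_true, Bool.false_or, List.all_eq_true] at h2
  -- v₀ is a parse
  have hsupp : ∀ m ∈ v₀, m ∈ u₀ := by
    intro m hm
    have : 0 < v₀.count m := List.count_pos_iff.mpr hm
    rw [← hIE₀.1 m] at this
    exact List.count_pos_iff.mp this
  have hlook : ∀ m ∈ v₀, lookA (u₀.zip bs) m = g m := by
    intro m hm
    rw [hbs]
    exact lookA_zip_map g u₀ m (hsupp m hm)
  have hvparse : v₀ ∈ parseF (lookA (u₀.zip bs)) 7 W2 := by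
    apply parseF_complete
    · rw [List.map_congr_left hlook]; exact hgv₀
    · intro m hm; rw [hlook m hm]; exact hne₀v m hm
    · rw [← hlen]; exact le_trans hk6 (by norm_num)
  have h3 := h2 v₀ hvparse
  have hiq : iEqB u₀ v₀ = true := iEqB_iff.mpr hIE₀
  rw [hiq, Bool.not_true, Bool.false_or, List.any_eq_true] at h3
  obtain ⟨τl, hτmem, hτ⟩ := h3
  rw [Bool.and_eq_true, beq_iff_eq, beq_iff_eq] at hτ
  obtain ⟨hτ1, hτ2⟩ := hτ
  set τ := permF τl with hτdef
  have hbij := permsL_bij τl hτmem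
  have hallmem : ∀ m : Fin 4, m ∈ u₀ := by
    intro m
    exact (List.mem_map_of_injective hbij.injective).mp (by rw [hτ1]; exact hall (τ m))
  have hpall : ∀ m : Fin 4, p m = true := fun m => List.of_mem_filter (hu₀ ▸ hallmem m)
  have hu₀u : u₀ = u := by rw [hu₀]; exact List.filter_eq_self.mpr (fun a _ => hpall a)
  have hv₀v : v₀ = v := by rw [hv₀]; exact List.filter_eq_self.mpr (fun a _ => hpall a)
  exact ⟨τ, hbij, by rw [← hu₀u]; exact hτ1, by rw [← hv₀v]; exact hτ2⟩
/- ===== Part 7: the congruence D ===== -/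

def CritL (l : List (Fin 4)) : Prop :=
  ∃ σ : Equiv.Perm (Fin 4), l = wL1l.map σ ∨ l = wL2l.map σ

def rD (u v : FreeMonoid (Fin 4)) : Prop :=
  IEq u.toList v.toList ∧ (CritL u.toList → u = v) ∧ (CritL v.toList → u = v)

lemma rD_refl (u : FreeMonoid (Fin 4)) : rD u u :=
  ⟨IEq.refl _, fun _ => rfl, fun _ => rfl⟩

lemma rD_symm {u v} (h : rD u v) : rD v u :=
  ⟨h.1.symm, fun hc => (h.2.2 hc).symm, fun hc => (h.2.1 hc).symm⟩

lemma rD_trans {u v w} (h : rD u v) (h' : rD v w) : rD u w := by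
  refine ⟨h.1.trans h'.1, fun hc => ?_, fun hc => ?_⟩
  · have h1 : u = v := h.2.1 hc
    subst h1
    exact h'.2.1 hc
  · have h1 : v = w := h'.2.2 hc
    subst h1
    exact h.2.2 hc

lemma map_ne_map (σ : Equiv.Perm (Fin 4)) : wL1l.map σ ≠ wL2l.map σ := by
  intro h
  have := List.map_injective_iff.mpr σ.injective h
  exact absurd this (by decide)

lemma prefix_noIEq (σ : Equiv.Perm (Fin 4)) (k : ℕ) (h1 : 1 ≤ k) (h2 : k ≤ 5) :
    ¬ IEq ((wL1l.map σ).take k) ((wL2l.map σ).take k) := by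
  intro h
  rw [← List.map_take, ← List.map_take] at h
  have h' := IEq_of_map σ.injective h
  interval_cases k <;> revert h' <;> decide

/-- key multiplication compatibility step -/
lemma mulAux {w x y z : FreeMonoid (Fin 4)} (h1 : rD w x) (h2 : rD y z)
    (hIE : IEq (w * y).toList (x * z).toList)
    (hc : CritL (w * y).toList) : w * y = x * z := by
  by_contra hne
  obtain ⟨σ, hcase⟩ := hc
  have hxztl : (x * z).toList = wL1l.map σ ∨ (x * z).toList = wL2l.map σ := by
    rcases hcase with hca | hca
    · exact classFact σ (hIE.symm.trans (hca ▸ IEq.refl _))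
    · exact classFact2 σ (hIE.symm.trans (hca ▸ IEq.refl _))
  -- identify which side
  have hnetl : (w * y).toList ≠ (x * z).toList := fun he => hne (FreeMonoid.toList.injective he)
  -- common setup
  have hlen : w.toList.length = x.toList.length :=
    length_eq_of_counts h1.1.1
  have happ1 : w.toList ++ y.toList = (w * y).toList := (FreeMonoid.toList_mul w y).symm
  have happ2 : x.toList ++ z.toList = (x * z).toList := (FreeMonoid.toList_mul x z).symm
  -- W1 is the word for (w*y), W2 the one for (x*z)
  obtain ⟨W1, W2, hW1, hW2, hWne, hWcrit1, hWcrit2, hWpre⟩ :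
      ∃ W1 W2 : List (Fin 4), (w * y).toList = W1 ∧ (x * z).toList = W2 ∧ W1 ≠ W2 ∧
        CritL W1 ∧ CritL W2 ∧
        (∀ k, 1 ≤ k → k ≤ 5 → ¬ IEq (W1.take k) (W2.take k)) := by
    rcases hcase with hca | hca <;> rcases hxztl with hxz | hxz
    · exact absurd (hca.trans hxz.symm) hnetl
    · exact ⟨wL1l.map σ, wL2l.map σ, hca, hxz, map_ne_map σ, ⟨σ, Or.inl rfl⟩, ⟨σ, Or.inr rfl⟩,
        fun k hk1 hk5 => prefix_noIEq σ k hk1 hk5⟩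
    · refine ⟨wL2l.map σ, wL1l.map σ, hca, hxz, (map_ne_map σ).symm, ⟨σ, Or.inr rfl⟩, ⟨σ, Or.inl rfl⟩,
        fun k hk1 hk5 h => prefix_noIEq σ k hk1 hk5 h.symm⟩
    · exact absurd (hca.trans hxz.symm) hnetl
  have hW1len : W1.length = 6 := by
    rcases hWcrit1 with ⟨σ', h'⟩ <;> rcases h' with h' | h' <;> simp [h', wL1l, wL2l]
  -- w.toList is a prefix
  have hwtake : w.toList = W1.take w.toList.length := by
    rw [← hW1, ← happ1, List.take_left]
  have hytake : y.toList = W1.drop w.toList.length := by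
    rw [← hW1, ← happ1, List.drop_left]
  have hxtake : x.toList = W2.take w.toList.length := by
    rw [← hW2, ← happ2, hlen, List.take_left]
  have hztake : z.toList = W2.drop w.toList.length := by
    rw [← hW2, ← happ2, hlen, List.drop_left]
  set k := w.toList.length with hkdef
  have hk6 : k ≤ 6 := by
    have : (w.toList ++ y.toList).length = 6 := by rw [happ1, hW1, hW1len]
    rw [List.length_append] at this
    omega
  rcases Nat.eq_zero_or_pos k with hk0 | hkpos
  · -- w, x empty; y, z are the full words
    have hy : y.toList = W1 := by rw [hytake, hk0, List.drop_zero]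
    have hz : z.toList = W2 := by rw [hztake, hk0, List.drop_zero]
    have : y = z := h2.2.1 (hy ▸ hWcrit1)
    rw [← hy, ← hz, this] at hWne
    exact hWne rfl
  rcases Nat.lt_or_ge k 6 with hklt | hk6'
  · -- 1 ≤ k ≤ 5 : contradiction with IEq w x
    exact hWpre k hkpos (by omega) (hwtake ▸ hxtake ▸ h1.1 |> fun hh => ⟨hh.1, hh.2⟩)
  · -- k = 6: w, x are the full words
    have hk : k = 6 := le_antisymm hk6 hk6'
    have hw : w.toList = W1 := by
      rw [hwtake, hk, ← hW1len, List.take_length]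
    have hx : x.toList = W2 := by
      have hW2len : W2.length = 6 := by
        rcases hWcrit2 with ⟨σ', h'⟩ <;> rcases h' with h' | h' <;> simp [h', wL1l, wL2l]
      rw [hxtake, hk, ← hW2len, List.take_length]
    have : w = x := h1.2.1 (hw ▸ hWcrit1)
    rw [← hw, ← hx, this] at hWne
    exact hWne rfl

def DCon : Con (FreeMonoid (Fin 4)) where
  r := rD
  iseqv := ⟨rD_refl, rD_symm, rD_trans⟩
  mul' := by
    intro w x y z h1 h2
    have hIE : IEq (w * y).toList (x * z).toList := by
      constructor
      · intro s
        rw [FreeMonoid.toList_mul, FreeMonoid.toList_mul, List.count_append, List.count_append,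
          h1.1.1 s, h2.1.1 s]
      · intro s t
        rw [FreeMonoid.toList_mul, FreeMonoid.toList_mul, befB_append, befB_append,
          h1.1.2 s t, h2.1.2 s t, contains_eq_count, contains_eq_count,
          contains_eq_count, contains_eq_count, h1.1.1 s, h2.1.1 t]
    exact ⟨hIE, fun hc => mulAux h1 h2 hIE hc,
      fun hc => (mulAux (rD_symm h1) (rD_symm h2) hIE.symm hc).symm⟩
/- ===== Part 8: invariants are necessary conditions for identities of Hypo ===== -/

def psiC (s : Fin 4) : FreeMonoid (Fin 4) →* Hypo :=
  FreeMonoid.lift fun i => if i = s then hypoCon.mk' (of (1:ℕ+)) else 1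

def cntHom (s : Fin 4) : FreeMonoid (Fin 4) →* Multiplicative ℕ :=
  FreeMonoid.lift fun i => Multiplicative.ofAdd (if i = s then 1 else 0)

lemma glen_psiC (s : Fin 4) : glen.comp (psiC s) = cntHom s := by
  apply FreeMonoid.hom_eq
  intro i
  simp only [MonoidHom.comp_apply, psiC, cntHom, FreeMonoid.lift_eval_of]
  by_cases h : i = s
  · rw [if_pos h, if_pos h]
    show glen (hypoCon.mk' (of (1:ℕ+))) = _
    rw [glen, Con.lift_mk']
    rfl
  · rw [if_neg h, if_neg h, map_one]
    rfl

lemma cntHom_eval (s : Fin 4) : ∀ l : List (Fin 4),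
    cntHom s (FreeMonoid.ofList l) = Multiplicative.ofAdd (l.count s) := by
  intro l
  induction l with
  | nil => rfl
  | cons a l ih =>
      rw [show FreeMonoid.ofList (a :: l) = of a * FreeMonoid.ofList l from rfl, map_mul, ih]
      show (FreeMonoid.lift _) (of a) * _ = _
      rw [FreeMonoid.lift_eval_of, List.count_cons]
      by_cases h : a = s
      · subst h; simp only [if_pos rfl, beq_self_eq_true, if_pos rfl]
        rw [← ofAdd_add]; congr 1; omega
      · rw [if_neg h, if_neg (by simp [h])]
        rw [← ofAdd_add]; congr 1; omega

lemma counts_of_hypoSat {u v : FreeMonoid (Fin 4)} (h : MSatisfies Hypo u v) :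
    ∀ s : Fin 4, u.toList.count s = v.toList.count s := by
  intro s
  have h1 := congrArg glen (h (psiC s))
  have h2 : cntHom s u = cntHom s v := by
    rw [← glen_psiC]; exact h1
  have h3 : ∀ w : FreeMonoid (Fin 4), cntHom s w = Multiplicative.ofAdd (w.toList.count s) := by
    intro w
    conv_lhs => rw [← FreeMonoid.ofList_toList w]
    exact cntHom_eval s w.toList
  rw [h3, h3] at h2
  exact Multiplicative.ofAdd.injective h2

def psiB (s t : Fin 4) : FreeMonoid (Fin 4) →* Hypo :=
  FreeMonoid.lift fun i =>
    if i = s then hypoCon.mk' (of (2:ℕ+)) else if i = t then hypoCon.mk' (of (1:ℕ+)) else 1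

def befHom (s t : Fin 4) : FreeMonoid (Fin 4) →* T2 :=
  FreeMonoid.lift fun i => if i = s then e2 else if i = t then e1 else 1

lemma kap_one : kap 1 = e1 := rfl
lemma kap_two : kap 2 = e2 := rfl

lemma g2_psiB (s t : Fin 4) : g2.comp (psiB s t) = befHom s t := by
  apply FreeMonoid.hom_eq
  intro i
  simp only [MonoidHom.comp_apply, psiB, befHom, FreeMonoid.lift_eval_of]
  by_cases h : i = s
  · rw [if_pos h, if_pos h]
    show g2 (hypoCon.mk' (of (2:ℕ+))) = e2
    rw [g2, Con.lift_mk']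
    show kap 2 = e2
    exact kap_two
  · rw [if_neg h, if_neg h]
    by_cases h' : i = t
    · rw [if_pos h', if_pos h']
      show g2 (hypoCon.mk' (of (1:ℕ+))) = e1
      rw [g2, Con.lift_mk']
      exact kap_one
    · rw [if_neg h', if_neg h', map_one]

lemma befHom_eval {s t : Fin 4} (hst : s ≠ t) : ∀ l : List (Fin 4),
    befHom s t (FreeMonoid.ofList l) = ⟨l.contains t, l.contains s, befB s t l⟩ := by
  intro l
  induction l with
  | nil => rfl
  | cons a l ih =>
      rw [show FreeMonoid.ofList (a :: l) = of a * FreeMonoid.ofList l from rfl, map_mul, ih]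
      show (FreeMonoid.lift _) (of a) * _ = _
      rw [FreeMonoid.lift_eval_of]
      have hts : (t == s) = false := by simp [Ne.symm hst]
      have hst' : (s == t) = false := by simp [hst]
      by_cases h : a = s
      · rw [if_pos h, T2.mul_def]
        have hta : (t == a) = false := by rw [h]; exact hts
        have hsa : (s == a) = true := by rw [h]; simp
        have c1 : (a :: l).contains t = l.contains t := by
          rw [List.contains_cons, hta, Bool.false_or]
        have c2 : (a :: l).contains s = true := by
          rw [List.contains_cons, hsa, Bool.true_or]
        have c3 : befB s t (a :: l) = (l.contains t || befB s t l) := by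
          have hd : decide (a = s) = true := by simp [h]
          simp [befB, hd]
        rw [c1, c2, c3]
        show T2.mk (e2.p || _) (e2.q || _) (e2.r || _ || (e2.q && _)) = _
        simp only [e2, Bool.false_or, Bool.true_or, Bool.true_and]
        rw [Bool.or_comm]
      · rw [if_neg h]
        by_cases h' : a = t
        · rw [if_pos h', T2.mul_def]
          have hta : (t == a) = true := by rw [h']; simp
          have hsa : (s == a) = false := by rw [h']; exact hst'
          have c1 : (a :: l).contains t = true := by
            rw [List.contains_cons, hta, Bool.true_or]
          have c2 : (a :: l).contains s = l.contains s := by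
            rw [List.contains_cons, hsa, Bool.false_or]
          have c3 : befB s t (a :: l) = befB s t l := by
            have hd : decide (a = s) = false := by simp [h]
            simp [befB, hd]
          rw [c1, c2, c3]
          show T2.mk (e1.p || _) (e1.q || _) (e1.r || _ || (e1.q && _)) = _
          simp only [e1, Bool.false_or, Bool.true_or, Bool.true_and, Bool.false_and,
            Bool.or_false]
        · rw [if_neg h', one_mul]
          have hta : (t == a) = false := by simp; exact fun he : t = a => h' he.symm
          have hsa : (s == a) = false := by simp; exact fun he : s = a => h he.symm
          have c1 : (a :: l).contains t = l.contains t := by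
            rw [List.contains_cons, hta, Bool.false_or]
          have c2 : (a :: l).contains s = l.contains s := by
            rw [List.contains_cons, hsa, Bool.false_or]
          have c3 : befB s t (a :: l) = befB s t l := by
            have hd : decide (a = s) = false := by simp [h]
            simp [befB, hd]
          rw [c1, c2, c3]

lemma befs_of_hypoSat {u v : FreeMonoid (Fin 4)} (h : MSatisfies Hypo u v) :
    ∀ s t : Fin 4, befB s t u.toList = befB s t v.toList := by
  intro s t
  by_cases hst : s = t
  · subst hst
    rw [befB_self, befB_self, counts_of_hypoSat h s]
  · have h1 := congrArg g2 (h (psiB s t))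
    have h2 : befHom s t u = befHom s t v := by
      rw [← g2_psiB]; exact h1
    have h3 : ∀ w : FreeMonoid (Fin 4),
        befHom s t w = ⟨w.toList.contains t, w.toList.contains s, befB s t w.toList⟩ := by
      intro w
      conv_lhs => rw [← FreeMonoid.ofList_toList w]
      exact befHom_eval hst w.toList
    rw [h3, h3] at h2
    exact congrArg T2.r h2

lemma IEq_of_hypoSat {u v : FreeMonoid (Fin 4)} (h : MSatisfies Hypo u v) :
    IEq u.toList v.toList :=
  ⟨counts_of_hypoSat h, befs_of_hypoSat h⟩
/- ===== Part 9: assembly ===== -/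

lemma toList_lift (c : Fin 4 → FreeMonoid (Fin 4)) (w : FreeMonoid (Fin 4)) :
    FreeMonoid.toList (FreeMonoid.lift c w) =
      ((FreeMonoid.toList w).map fun i => FreeMonoid.toList (c i)).flatten := by
  conv_lhs => rw [← FreeMonoid.ofList_toList w]
  generalize FreeMonoid.toList w = l
  induction l with
  | nil => simp
  | cons a l ih =>
      rw [show FreeMonoid.ofList (a :: l) = of a * FreeMonoid.ofList l from rfl, map_mul,
        FreeMonoid.toList_mul, ih, List.map_cons, List.flatten_cons, FreeMonoid.lift_eval_of]

lemma wL1_toList : FreeMonoid.toList wL1 = wL1l := rfl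
lemma wL2_toList : FreeMonoid.toList wL2 = wL2l := rfl

lemma keyStep (p1 p2 : FreeMonoid (Fin 4)) (c : Fin 4 → FreeMonoid (Fin 4))
    (hIEp : IEq (FreeMonoid.toList p1) (FreeMonoid.toList p2))
    (hIEα : IEq (FreeMonoid.toList (FreeMonoid.lift c p1)) (FreeMonoid.toList (FreeMonoid.lift c p2)))
    (hne : FreeMonoid.lift c p1 ≠ FreeMonoid.lift c p2)
    (hcrit : CritL (FreeMonoid.toList (FreeMonoid.lift c p1))) :
    ∃ τ : Fin 4 → Fin 4, Function.Bijective τ ∧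
      (((FreeMonoid.toList p1).map τ = wL1l ∧ (FreeMonoid.toList p2).map τ = wL2l) ∨
       ((FreeMonoid.toList p1).map τ = wL2l ∧ (FreeMonoid.toList p2).map τ = wL1l)) := by
  obtain ⟨σ, hcase⟩ := hcrit
  have hnetl : FreeMonoid.toList (FreeMonoid.lift c p1) ≠ FreeMonoid.toList (FreeMonoid.lift c p2) :=
    fun he => hne (FreeMonoid.toList.injective he)
  set g : Fin 4 → List (Fin 4) := fun i => ((FreeMonoid.toList (c i)).map σ.symm) with hg
  have hflat : ∀ w : FreeMonoid (Fin 4),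
      ((FreeMonoid.toList w).map g).flatten =
        (FreeMonoid.toList (FreeMonoid.lift c w)).map σ.symm := by
    intro w
    rw [toList_lift, List.map_flatten, List.map_map]
    rfl
  rcases hcase with hca | hca
  · have h2 : FreeMonoid.toList (FreeMonoid.lift c p2) = wL2l.map σ := by
      have hh := hIEα.symm
      rw [hca] at hh
      rcases classFact σ hh with h | h
      · exact absurd (hca.trans h.symm) hnetl
      · exact h
    have hu : ((FreeMonoid.toList p1).map g).flatten = wL1l := by
      rw [hflat, hca, List.map_map]; simp
    have hv : ((FreeMonoid.toList p2).map g).flatten = wL2l := by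
      rw [hflat, h2, List.map_map]; simp
    obtain ⟨τ, hb, h1', h2'⟩ := bigTile wL1l wL2l fcCheck1 rfl all_mem_wL1l g _ _ hIEp hu hv
    exact ⟨τ, hb, Or.inl ⟨h1', h2'⟩⟩
  · have h2 : FreeMonoid.toList (FreeMonoid.lift c p2) = wL1l.map σ := by
      have hh := hIEα.symm
      rw [hca] at hh
      rcases classFact2 σ hh with h | h
      · exact h
      · exact absurd (hca.trans h.symm) hnetl
    have hu : ((FreeMonoid.toList p1).map g).flatten = wL2l := by
      rw [hflat, hca, List.map_map]; simp
    have hv : ((FreeMonoid.toList p2).map g).flatten = wL1l := by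
      rw [hflat, h2, List.map_map]; simp
    obtain ⟨τ, hb, h1', h2'⟩ := bigTile wL2l wL1l fcCheck2 rfl all_mem_wL2l g _ _ hIEp hu hv
    exact ⟨τ, hb, Or.inr ⟨h1', h2'⟩⟩

lemma map_eq_of_list {τ : Fin 4 → Fin 4} {P W : FreeMonoid (Fin 4)} {Wl : List (Fin 4)}
    (hW : FreeMonoid.toList W = Wl) (h : (FreeMonoid.toList P).map τ = Wl) :
    FreeMonoid.map τ P = W :=
  FreeMonoid.toList.injective (by rw [FreeMonoid.toList_map, h, hW])

/-- The identity (L) `xyzxty ≈ yxzxty` is not a consequence of the set `S` of all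
nontrivial identities in at most four variables satisfied by `hypo`, excluding (L)
itself and identities equivalent to it: there is a monoid satisfying every identity
in `S` but not satisfying (L). -/
theorem idL_not_consequence :
    ∃ (M : Type) (instM : Monoid M),
      (∀ p : FreeMonoid (Fin 4) × FreeMonoid (Fin 4),
        p.1 ≠ p.2 → MSatisfies Hypo p.1 p.2 → ¬ EquivIdent p (wL1, wL2) →
          @MSatisfies M instM _ p.1 p.2) ∧
      ¬ @MSatisfies M instM _ wL1 wL2 := by
  
  classical
  refine ⟨DCon.Quotient, inferInstance, ?_, ?_⟩
  · rintro ⟨P1, P2⟩ hne hsat hneq ψ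
    choose c hc using fun i : Fin 4 => Con.mk'_surjective (c := DCon) (ψ (of i))
    have hψ : ψ = DCon.mk'.comp (FreeMonoid.lift c) := by
      apply FreeMonoid.hom_eq
      intro i
      simp only [MonoidHom.comp_apply, FreeMonoid.lift_eval_of, hc i]
    have hsat' : MSatisfies Hypo (FreeMonoid.lift c P1) (FreeMonoid.lift c P2) :=
      fun φ => hsat (φ.comp (FreeMonoid.lift c))
    have hIEα := IEq_of_hypoSat hsat'
    have hIEp := IEq_of_hypoSat hsat
    show ψ P1 = ψ P2
    rw [hψ]
    simp only [MonoidHom.comp_apply]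
    rw [show (DCon.mk' (FreeMonoid.lift c P1) : DCon.Quotient) = ↑(FreeMonoid.lift c P1) from rfl,
      show (DCon.mk' (FreeMonoid.lift c P2) : DCon.Quotient) = ↑(FreeMonoid.lift c P2) from rfl,
      Con.eq]
    refine ⟨hIEα, ?_, ?_⟩
    · intro hcrit
      by_contra hne2
      obtain ⟨τ, hb, hor⟩ := keyStep P1 P2 c hIEp hIEα hne2 hcrit
      apply hneq
      refine ⟨Equiv.ofBijective τ hb, ?_⟩
      rcases hor with ⟨ha, hb'⟩ | ⟨ha, hb'⟩
      · exact Or.inl ⟨map_eq_of_list wL1_toList ha, map_eq_of_list wL2_toList hb'⟩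
      · exact Or.inr ⟨map_eq_of_list wL2_toList ha, map_eq_of_list wL1_toList hb'⟩
    · intro hcrit
      by_contra hne2
      obtain ⟨τ, hb, hor⟩ := keyStep P2 P1 c hIEp.symm hIEα.symm (Ne.symm hne2) hcrit
      apply hneq
      refine ⟨Equiv.ofBijective τ hb, ?_⟩
      rcases hor with ⟨ha, hb'⟩ | ⟨ha, hb'⟩
      · exact Or.inr ⟨map_eq_of_list wL2_toList hb', map_eq_of_list wL1_toList ha⟩
      · exact Or.inl ⟨map_eq_of_list wL1_toList hb', map_eq_of_list wL2_toList ha⟩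
  · intro h
    have h1 := h DCon.mk'
    rw [show (DCon.mk' wL1 : DCon.Quotient) = ↑wL1 from rfl,
      show (DCon.mk' wL2 : DCon.Quotient) = ↑wL2 from rfl, Con.eq] at h1
    have hcrit : CritL (FreeMonoid.toList wL1) := by
      refine ⟨Equiv.refl _, Or.inl ?_⟩
      rw [wL1_toList]
      simp
    have := h1.2.1 hcrit
    have h2 : wL1l = wL2l := by
      rw [← wL1_toList, ← wL2_toList, this]
    exact absurd h2 (by decide)
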